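/- arXiv:2004.11029 — 4 statements merged into one kernel-verified Lean document; each statement's English description precedes it below -/
import Mathlib

section
/- The Omega constant Ω, defined by Ω * exp(Ω) = 1, is irrational. -/
open Polynomial Finset

lemma niven_dvd (n j : ℕ) (r : ℤ) (hr : r = 0 ∨ r = 1) :
    (n.factorial : ℤ) ∣ ((derivative^[j] (X ^ n * (1 - X) ^ n : ℤ[X])).eval r) := by
  set p : ℤ[X] := X ^ n * (1 - X) ^ n with hp
  have key : derivative^[j] p = j.factorial • hasseDeriv j p := by
    rw [← Polynomial.factorial_smul_hasseDeriv]; rfl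
  rw [key]
  rcases lt_or_ge j n with hj | hj
  · -- hasseDeriv j p eval r = 0
    have hdvd : (X : ℤ[X]) ^ n ∣ taylor r p := by
      rcases hr with h | h
      · subst h; simp [taylor_apply]
        exact Dvd.intro _ rfl
      · subst h
        rw [taylor_apply, hp]
        have : (X ^ n * (1 - X) ^ n : ℤ[X]).comp (X + C 1)
            = (X + 1) ^ n * (-X) ^ n := by
          simp [mul_comp, pow_comp, sub_comp, X_comp, one_comp]
        rw [this]
        exact ⟨(-1) ^ n * (X + 1) ^ n, by ring⟩
    have : (hasseDeriv j p).eval r = 0 := by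
      rw [← taylor_coeff]
      exact (Polynomial.X_pow_dvd_iff.mp hdvd) j hj
    simp [this]
  · have h1 : (n.factorial : ℤ) ∣ (j.factorial : ℤ) := Int.natCast_dvd_natCast.mpr (Nat.factorial_dvd_factorial hj)
    have : ((j.factorial • hasseDeriv j p).eval r) = (j.factorial : ℤ) * (hasseDeriv j p).eval r := by
      simp [smul_eval]  -- guess
    rw [this]
    exact Dvd.dvd.mul_right h1 _

lemma niven_telescope (n : ℕ) (s : ℤ) (p : ℤ[X]) (hdeg : p.natDegree ≤ 2 * n) :
    s • (∑ j ∈ range (2 * n + 1), ((-1) ^ j * s ^ (2 * n - j)) • derivative^[j] p)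
      + derivative (∑ j ∈ range (2 * n + 1), ((-1) ^ j * s ^ (2 * n - j)) • derivative^[j] p)
      = (s ^ (2 * n + 1)) • p := by
  set a : ℕ → ℤ[X] := fun j => ((-1) ^ j * s ^ (2 * n + 1 - j)) • derivative^[j] p with ha
  have h1 : s • (∑ j ∈ range (2 * n + 1), ((-1) ^ j * s ^ (2 * n - j)) • derivative^[j] p)
      = ∑ j ∈ range (2 * n + 1), a j := by
    rw [smul_sum]
    refine sum_congr rfl fun j hj => ?_
    rw [mem_range] at hj
    rw [ha, smul_smul]
    congr 1
    have : 2 * n + 1 - j = (2 * n - j) + 1 := by omega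
    rw [this, pow_succ]
    ring
  have h2 : derivative (∑ j ∈ range (2 * n + 1), ((-1) ^ j * s ^ (2 * n - j)) • derivative^[j] p)
      = ∑ j ∈ range (2 * n + 1), (- a (j + 1)) := by
    rw [map_sum]
    refine sum_congr rfl fun j hj => ?_
    rw [derivative_smul, ha]
    have : derivative (derivative^[j] p) = derivative^[j+1] p := by
      rw [Function.iterate_succ_apply']
    rw [this]
    have h3 : 2 * n + 1 - (j + 1) = 2 * n - j := by omega
    show _ = -(((-1) ^ (j+1) * s ^ (2 * n + 1 - (j+1))) • derivative^[j+1] p)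
    rw [h3, ← neg_smul]
    congr 1
    ring
  rw [h1, h2, ← sum_add_distrib]
  have : ∀ j, a j + -a (j+1) = a j - a (j+1) := fun j => by ring
  simp_rw [this]
  rw [Finset.sum_range_sub' a (2*n+1)]
  have hz : a (2 * n + 1) = 0 := by
    rw [ha]
    simp only
    rw [Polynomial.iterate_derivative_eq_zero (by omega), smul_zero]
  rw [hz, sub_zero, ha]
  simp

section Main
variable (n s : ℕ)

noncomputable def nivP : ℤ[X] := X ^ n * (1 - X) ^ n
noncomputable def nivF : ℤ[X] :=
  ∑ j ∈ range (2 * n + 1), ((-1) ^ j * (s : ℤ) ^ (2 * n - j)) • derivative^[j] (nivP n)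
noncomputable def nivPr : ℝ[X] := (nivP n).map (Int.castRingHom ℝ)
noncomputable def nivFr : ℝ[X] := (nivF n s).map (Int.castRingHom ℝ)

lemma nivP_natDegree_le : (nivP n).natDegree ≤ 2 * n := by
  refine le_trans (natDegree_mul_le) ?_
  have h1 : (X ^ n : ℤ[X]).natDegree ≤ n := by simp
  have h2 : ((1 - X) ^ n : ℤ[X]).natDegree ≤ n := by
    refine le_trans (natDegree_pow_le) ?_
    have : (1 - X : ℤ[X]).natDegree ≤ 1 := by
      refine le_trans (natDegree_sub_le _ _) ?_; simp
    calc n * (1 - X : ℤ[X]).natDegree ≤ n * 1 := Nat.mul_le_mul_left n this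
      _ = n := mul_one n
  omega

lemma nivPr_eval (x : ℝ) : eval x (nivPr n) = x ^ n * (1 - x) ^ n := by
  simp [nivPr, nivP]

lemma eval_teleR (x : ℝ) :
    (s : ℝ) * eval x (nivFr n s) + eval x (derivative (nivFr n s))
      = (s : ℝ) ^ (2 * n + 1) * eval x (nivPr n) := by
  have tele := niven_telescope n (s : ℤ) (nivP n) (nivP_natDegree_le n)
  have tele' : C (s:ℤ) * nivF n s + derivative (nivF n s)
      = C ((s:ℤ) ^ (2 * n + 1)) * nivP n := by
    rw [← smul_eq_C_mul, ← smul_eq_C_mul]; exact tele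
  have := congrArg (Polynomial.map (Int.castRingHom ℝ)) tele'
  rw [Polynomial.map_add, Polynomial.map_mul, Polynomial.map_mul, map_C, map_C,
    ← derivative_map] at this
  have := congrArg (eval x) this
  simpa [nivFr, nivPr] using this


lemma niv_cont : Continuous (fun x : ℝ => (s:ℝ) ^ (2*n+1) * (Real.exp (s*x) * eval x (nivPr n))) := by
  fun_prop

lemma niv_integral_eq :
    ∫ x in (0:ℝ)..1, (s:ℝ) ^ (2*n+1) * (Real.exp (s*x) * eval x (nivPr n))
      = Real.exp s * eval 1 (nivFr n s) - eval 0 (nivFr n s) := by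
  have hd : ∀ x ∈ Set.uIcc (0:ℝ) 1,
      HasDerivAt (fun x => Real.exp (s*x) * eval x (nivFr n s))
        ((s:ℝ) ^ (2*n+1) * (Real.exp (s*x) * eval x (nivPr n))) x := by
    intro x _
    have h1 : HasDerivAt (fun x : ℝ => Real.exp (s*x)) (Real.exp (s*x) * ((s:ℝ)*1)) x :=
      ((hasDerivAt_id x).const_mul (s:ℝ)).exp
    have h2 := h1.mul ((nivFr n s).hasDerivAt x)
    refine h2.congr_deriv ?_
    have := eval_teleR n s x
    ring_nf
    ring_nf at this
    nlinarith [this, Real.exp_pos ((s:ℝ)*x)]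
  have := intervalIntegral.integral_eq_sub_of_hasDerivAt hd
    ((niv_cont n s).intervalIntegrable 0 1)
  rw [this]
  norm_num

lemma niv_integral_pos (hs : 0 < s) :
    0 < ∫ x in (0:ℝ)..1, (s:ℝ) ^ (2*n+1) * (Real.exp (s*x) * eval x (nivPr n)) := by
  refine intervalIntegral.intervalIntegral_pos_of_pos_on
    ((niv_cont n s).intervalIntegrable 0 1) (fun x hx => ?_) one_pos
  obtain ⟨h0, h1⟩ := hx
  have := nivPr_eval n x
  have hp : 0 < eval x (nivPr n) := by
    rw [this]
    exact mul_pos (pow_pos h0 _) (pow_pos (by linarith) _)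
  have hss : (0:ℝ) < (s:ℝ) := by exact_mod_cast hs
  exact mul_pos (pow_pos hss _) (mul_pos (Real.exp_pos _) hp)

lemma niv_integral_le :
    ∫ x in (0:ℝ)..1, (s:ℝ) ^ (2*n+1) * (Real.exp (s*x) * eval x (nivPr n))
      ≤ (s:ℝ) ^ (2*n+1) * Real.exp s := by
  have hle : ∀ x ∈ Set.Icc (0:ℝ) 1,
      (s:ℝ) ^ (2*n+1) * (Real.exp (s*x) * eval x (nivPr n))
        ≤ (s:ℝ) ^ (2*n+1) * Real.exp s := by
    intro x hx
    obtain ⟨h0, h1⟩ := hx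
    have he : Real.exp (s*x) ≤ Real.exp s := by
      apply Real.exp_le_exp.mpr
      nlinarith [Nat.cast_nonneg (α := ℝ) s]
    have hp1 : eval x (nivPr n) ≤ 1 := by
      rw [nivPr_eval]
      have : x ^ n ≤ 1 := pow_le_one₀ h0 h1
      have h2 : (1-x) ^ n ≤ 1 := pow_le_one₀ (by linarith) (by linarith)
      nlinarith [pow_nonneg h0 n, pow_nonneg (by linarith : (0:ℝ) ≤ 1 - x) n]
    have hp0 : 0 ≤ eval x (nivPr n) := by
      rw [nivPr_eval]
      exact mul_nonneg (pow_nonneg h0 _) (pow_nonneg (by linarith) _)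
    have hsp : (0:ℝ) ≤ (s:ℝ) ^ (2*n+1) := by positivity
    refine mul_le_mul_of_nonneg_left ?_ hsp
    calc Real.exp (s*x) * eval x (nivPr n) ≤ Real.exp s * 1 :=
          mul_le_mul he hp1 hp0 (Real.exp_pos _).le
      _ = Real.exp s := mul_one _
  calc ∫ x in (0:ℝ)..1, (s:ℝ) ^ (2*n+1) * (Real.exp (s*x) * eval x (nivPr n))
      ≤ ∫ _x in (0:ℝ)..1, (s:ℝ) ^ (2*n+1) * Real.exp s := by
        exact intervalIntegral.integral_mono_on zero_le_one
          ((niv_cont n s).intervalIntegrable 0 1)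
          (continuous_const.intervalIntegrable 0 1) hle
    _ = (s:ℝ) ^ (2*n+1) * Real.exp s := by simp

lemma nivF_eval_dvd (r : ℤ) (hr : r = 0 ∨ r = 1) :
    ((n.factorial : ℤ)) ∣ eval r (nivF n s) := by
  rw [nivF, eval_finset_sum]
  refine Finset.dvd_sum fun j hj => ?_
  rw [smul_eq_C_mul, eval_mul, eval_C]
  exact Dvd.dvd.mul_left (niven_dvd n j r hr) _

end Main

lemma exp_nat_irrational (s : ℕ) (hs : 0 < s) : Irrational (Real.exp s) := by
  rintro ⟨r, hr⟩
  set P : ℤ := r.num with hPdef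
  set Q : ℤ := (r.den : ℤ) with hQdef
  have hQ0 : (0:ℤ) < Q := by simp [hQdef, r.pos]
  have hQ0R : (0:ℝ) < (Q:ℝ) := by exact_mod_cast hQ0
  have hQe : (Q : ℝ) * Real.exp s = P := by
    rw [← hr, Rat.cast_def]
    field_simp [hQdef, hPdef]
    rw [hQdef, hPdef]; push_cast; ring
  have hsR : (0:ℝ) < (s:ℝ) := by exact_mod_cast hs
  have hc : (0:ℝ) < (Q:ℝ) * (s:ℝ) * Real.exp s := by positivity
  obtain ⟨n, hn⟩ : ∃ n : ℕ,
      ((s:ℝ)^2)^n / n.factorial < 1 / ((Q:ℝ) * (s:ℝ) * Real.exp s) :=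
    ((FloorSemiring.tendsto_pow_div_factorial_atTop ((s:ℝ)^2)).eventually
      (gt_mem_nhds (by positivity))).exists
  have hfac : (0:ℝ) < (n.factorial : ℝ) := by exact_mod_cast n.factorial_pos
  have hlt : (Q:ℝ) * ((s:ℝ)^(2*n+1) * Real.exp s) < (n.factorial : ℝ) := by
    rw [div_lt_div_iff₀ hfac hc] at hn
    have hpow : (s:ℝ)^(2*n+1) = ((s:ℝ)^2)^n * (s:ℝ) := by
      rw [← pow_mul, ← pow_succ]
    rw [hpow]
    nlinarith [hn]
  set E := ∫ x in (0:ℝ)..1, (s:ℝ) ^ (2*n+1) * (Real.exp (s*x) * eval x (nivPr n)) with hE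
  have hE1 : E = Real.exp s * eval 1 (nivFr n s) - eval 0 (nivFr n s) := niv_integral_eq n s
  obtain ⟨c, hcc⟩ := nivF_eval_dvd n s 0 (Or.inl rfl)
  obtain ⟨d, hdd⟩ := nivF_eval_dvd n s 1 (Or.inr rfl)
  have hev0 : eval (0:ℝ) (nivFr n s) = ((n.factorial : ℝ)) * (c : ℝ) := by
    have h : eval (0:ℝ) (nivFr n s) = ((eval 0 (nivF n s) : ℤ) : ℝ) := by
      simpa [nivFr] using Polynomial.eval_intCast_map (Int.castRingHom ℝ) (nivF n s) 0
    rw [h, hcc]; push_cast; ring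
  have hev1 : eval (1:ℝ) (nivFr n s) = ((n.factorial : ℝ)) * (d : ℝ) := by
    have h : eval (1:ℝ) (nivFr n s) = ((eval 1 (nivF n s) : ℤ) : ℝ) := by
      simpa [nivFr] using Polynomial.eval_intCast_map (Int.castRingHom ℝ) (nivF n s) 1
    rw [h, hdd]; push_cast; ring
  have hQE : (Q:ℝ) * E = (n.factorial : ℝ) * ((P * d - Q * c : ℤ) : ℝ) := by
    rw [hE1, hev0, hev1]
    push_cast
    linear_combination ((n.factorial : ℝ) * (d : ℝ)) * hQe
  have hpos : 0 < E := niv_integral_pos n s hs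
  have hintpos : 0 < (P * d - Q * c : ℤ) := by
    have h1 : (0:ℝ) < (n.factorial : ℝ) * ((P * d - Q * c : ℤ) : ℝ) := by
      rw [← hQE]; exact mul_pos hQ0R hpos
    have h2 : (0:ℝ) < ((P * d - Q * c : ℤ) : ℝ) := by
      rcases lt_or_ge 0 ((P * d - Q * c : ℤ) : ℝ) with h | h
      · exact h
      · nlinarith
    exact_mod_cast h2
  have hge : (n.factorial : ℝ) ≤ (Q:ℝ) * E := by
    rw [hQE]
    have : (1:ℝ) ≤ ((P * d - Q * c : ℤ) : ℝ) := by exact_mod_cast hintpos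
    nlinarith
  have hub : (Q:ℝ) * E ≤ (Q:ℝ) * ((s:ℝ)^(2*n+1) * Real.exp s) :=
    mul_le_mul_of_nonneg_left (niv_integral_le n s) hQ0R.le
  linarith

theorem omega_irrational (Ω : ℝ) (hΩ : Ω * Real.exp Ω = 1) : Irrational Ω := by
  rintro ⟨r, hr⟩
  have hΩpos : 0 < Ω := by nlinarith [Real.exp_pos Ω]
  have hr0 : 0 < r := by rwa [← hr, Rat.cast_pos] at hΩpos
  have hΩne : Ω ≠ 0 := ne_of_gt hΩpos
  have hexp : Real.exp Ω = ((1/r : ℚ) : ℝ) := by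
    push_cast
    rw [hr]
    field_simp
    linarith [hΩ]
  have hnumpos : 0 < r.num := Rat.num_pos.mpr hr0
  have h1 : ((r.num.toNat : ℕ) : ℝ) = Ω * r.den := by
    rw [← hr, Rat.cast_def]
    have : ((r.num.toNat : ℕ) : ℝ) = (r.num : ℝ) := by
      exact_mod_cast congrArg Int.cast (Int.toNat_of_nonneg hnumpos.le)
    rw [this]
    have hden : ((r.den : ℕ) : ℝ) ≠ 0 := by exact_mod_cast r.den_ne_zero
    field_simp
  have hnum : Real.exp ((r.num.toNat : ℕ) : ℝ) = (((1/r)^r.den : ℚ) : ℝ) := by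
    rw [h1, mul_comm, Real.exp_nat_mul Ω r.den]
    rw [hexp]
    push_cast
    ring
  exact exp_nat_irrational r.num.toNat (by omega) ⟨(1/r)^(r.den), hnum.symm⟩
end

section
/- The sequence defined by x₀ = 1 and x_{n+1} = (1 + x_n) / (1 + exp(x_n)) converges to the Omega constant Ω, the unique real solution of x * exp(x) = 1. -/
open Real Filter

noncomputable def omegaG (x : ℝ) : ℝ := (1 + x) / (1 + Real.exp x)

noncomputable def omegaG' (x : ℝ) : ℝ :=
  (1 * (1 + Real.exp x) - (1 + x) * Real.exp x) / (1 + Real.exp x) ^ 2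

lemma hasDerivAt_omegaG (x : ℝ) : HasDerivAt omegaG (omegaG' x) x := by
  have h1 : HasDerivAt (fun y : ℝ => 1 + y) 1 x := by
    simpa using (hasDerivAt_id x).const_add 1
  have h2 : HasDerivAt (fun y : ℝ => 1 + Real.exp y) (Real.exp x) x := by
    simpa using (Real.hasDerivAt_exp x).const_add 1
  have hne : (1 : ℝ) + Real.exp x ≠ 0 := by positivity
  exact (h1.div h2 hne).congr_deriv (by simp [omegaG'])

lemma omegaG'_bound {x : ℝ} (hx : x ∈ Set.Icc (0:ℝ) 1) :
    ‖omegaG' x‖ ≤ (Real.exp 1 - 1) / 4 := by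
  obtain ⟨hx0, hx1⟩ := hx
  have hex : Real.exp x ≤ Real.exp 1 := Real.exp_le_exp.mpr hx1
  have hex1 : (1:ℝ) ≤ Real.exp x := by
    simpa using Real.exp_le_exp.mpr hx0
  have he2 : (2:ℝ) ≤ Real.exp 1 := by
    nlinarith [Real.add_one_le_exp (1:ℝ)]
  have hnum : |1 * (1 + Real.exp x) - (1 + x) * Real.exp x| ≤ Real.exp 1 - 1 := by
    rw [abs_le]
    constructor <;> nlinarith [Real.exp_pos x]
  have hden : (4:ℝ) ≤ (1 + Real.exp x) ^ 2 := by nlinarith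
  rw [Real.norm_eq_abs, omegaG', abs_div, abs_of_nonneg (by positivity : (0:ℝ) ≤ (1 + Real.exp x)^2)]
  calc |1 * (1 + Real.exp x) - (1 + x) * Real.exp x| / (1 + Real.exp x) ^ 2
      ≤ (Real.exp 1 - 1) / 4 := by
        apply div_le_div₀ (by linarith) hnum (by norm_num) hden

lemma omegaG_lip {a b : ℝ} (ha : a ∈ Set.Icc (0:ℝ) 1) (hb : b ∈ Set.Icc (0:ℝ) 1) :
    |omegaG a - omegaG b| ≤ (Real.exp 1 - 1) / 4 * |a - b| := by
  have := (convex_Icc (0:ℝ) 1).norm_image_sub_le_of_norm_hasDerivWithin_le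
    (f := omegaG) (f' := omegaG') (C := (Real.exp 1 - 1) / 4)
    (fun y _ => (hasDerivAt_omegaG y).hasDerivWithinAt)
    (fun y hy => omegaG'_bound hy) hb ha
  simpa [Real.norm_eq_abs] using this

theorem omega_iteration_tendsto (Ω : ℝ) (hΩ : Ω * Real.exp Ω = 1)
    (x : ℕ → ℝ) (h0 : x 0 = 1)
    (hrec : ∀ n, x (n + 1) = (1 + x n) / (1 + Real.exp (x n))) :
    Filter.Tendsto x Filter.atTop (nhds Ω) := by
  set c : ℝ := (Real.exp 1 - 1) / 4 with hc
  have he2 : (2:ℝ) ≤ Real.exp 1 := by nlinarith [Real.add_one_le_exp (1:ℝ)]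
  have he3 : Real.exp 1 < 3 := by
    have := Real.exp_one_lt_d9; linarith
  have hc0 : 0 ≤ c := by rw [hc]; linarith
  have hc1 : c < 1 := by rw [hc]; linarith
  -- Ω ∈ [0,1]
  have hΩpos : 0 < Ω := by
    by_contra h
    push_neg at h
    nlinarith [Real.exp_pos Ω]
  have hΩle : Ω ≤ 1 := by
    by_contra h
    push_neg at h
    nlinarith [Real.add_one_le_exp Ω]
  have hΩmem : Ω ∈ Set.Icc (0:ℝ) 1 := ⟨le_of_lt hΩpos, hΩle⟩
  -- fixed point
  have hfix : omegaG Ω = Ω := by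
    have hne : (1:ℝ) + Real.exp Ω ≠ 0 := by positivity
    rw [omegaG, div_eq_iff hne]
    nlinarith
  -- invariance
  have hinv : ∀ y ∈ Set.Icc (0:ℝ) 1, omegaG y ∈ Set.Icc (0:ℝ) 1 := by
    intro y ⟨hy0, hy1⟩
    have hpos : (0:ℝ) < 1 + Real.exp y := by positivity
    simp only [omegaG]
    constructor
    · apply div_nonneg (by linarith) (le_of_lt hpos)
    · rw [div_le_one hpos]
      nlinarith [Real.add_one_le_exp y]
  -- induction
  have key : ∀ n, x n ∈ Set.Icc (0:ℝ) 1 ∧ |x n - Ω| ≤ c ^ n := by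
    intro n
    induction n with
    | zero =>
      refine ⟨by rw [h0]; exact ⟨zero_le_one, le_refl 1⟩, ?_⟩
      rw [h0, pow_zero, abs_le]
      constructor <;> linarith
    | succ n ih =>
      obtain ⟨hmem, hb⟩ := ih
      have hx1 : x (n + 1) = omegaG (x n) := by rw [hrec n, omegaG]
      refine ⟨hx1 ▸ hinv _ hmem, ?_⟩
      calc |x (n + 1) - Ω| = |omegaG (x n) - omegaG Ω| := by rw [hx1, hfix]
        _ ≤ c * |x n - Ω| := omegaG_lip hmem hΩmem
        _ ≤ c * c ^ n := by
            exact mul_le_mul_of_nonneg_left hb hc0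
        _ = c ^ (n + 1) := by ring
  -- conclude
  rw [tendsto_iff_dist_tendsto_zero]
  simp only [Real.dist_eq]
  exact squeeze_zero (fun n => abs_nonneg _) (fun n => (key n).2)
    (tendsto_pow_atTop_nhds_zero_of_lt_one hc0 hc1)
end

section
/- The power series ∑_{n≥1} (-1)^{n-1} n^{n-1} x^n / n! has radius of convergence exactly 1/e. -/
open Real Filter Asymptotics Topology

/-- The formal multilinear series of `∑_{n≥1} (-1)^{n-1} n^{n-1} xⁿ / n!`. -/
noncomputable def lambertWSeries : FormalMultilinearSeries ℝ ℝ ℝ := fun n =>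
  (if n = 0 then (0 : ℝ) else (-1) ^ (n - 1) * (n : ℝ) ^ (n - 1) / n.factorial) •
    ContinuousMultilinearMap.mkPiAlgebraFin ℝ n ℝ

lemma norm_lambertWSeries {n : ℕ} (hn : n ≠ 0) :
    ‖lambertWSeries n‖ = (n : ℝ) ^ (n - 1) / n.factorial := by
  have hs : ∀ c : ℝ, ‖c • ContinuousMultilinearMap.mkPiAlgebraFin ℝ n ℝ‖ =
      ‖c‖ * ‖ContinuousMultilinearMap.mkPiAlgebraFin ℝ n ℝ‖ := fun c => by
    with_unfolding_all
      exact norm_smul (β := ContinuousMultilinearMap ℝ (fun _ : Fin n => ℝ) ℝ) c _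
  rw [lambertWSeries, if_neg hn]
  rw [hs, ContinuousMultilinearMap.norm_mkPiAlgebraFin, mul_one,
    Real.norm_eq_abs, abs_div, abs_mul, abs_pow, abs_pow, abs_neg, abs_one, one_pow, one_mul,
    Nat.abs_cast, Nat.abs_cast]

lemma exp_one_mul_pow_le {n : ℕ} (hn : 1 ≤ n) :
    exp 1 * (n : ℝ) ^ (n + 1) ≤ ((n : ℝ) + 1) ^ (n + 1) := by
  have hn0 : (0 : ℝ) < n := by exact_mod_cast hn
  have ha : (0 : ℝ) < (n : ℝ) + 1 := by linarith
  have h2 := Real.add_one_le_exp (-(((n : ℝ) + 1)⁻¹))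
  have h3 : (n : ℝ) / ((n : ℝ) + 1) ≤ (exp (((n : ℝ) + 1)⁻¹))⁻¹ := by
    rw [← Real.exp_neg]
    calc (n : ℝ) / ((n : ℝ) + 1) = -(((n : ℝ) + 1)⁻¹) + 1 := by field_simp; ring
    _ ≤ _ := h2
  have h4 : exp (((n : ℝ) + 1)⁻¹) ≤ ((n : ℝ) + 1) / n := by
    have hpos : (0 : ℝ) < (n : ℝ) / ((n : ℝ) + 1) := by positivity
    have := inv_anti₀ hpos h3
    rwa [inv_inv, inv_div] at this
  have h5 : exp 1 ≤ (((n : ℝ) + 1) / n) ^ (n + 1) := by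
    have := pow_le_pow_left₀ (Real.exp_nonneg _) h4 (n + 1)
    rwa [← Real.exp_nat_mul, show ((n + 1 : ℕ) : ℝ) * ((n : ℝ) + 1)⁻¹ = 1 by
      push_cast; field_simp] at this
  calc exp 1 * (n : ℝ) ^ (n + 1) ≤ (((n : ℝ) + 1) / n) ^ (n + 1) * (n : ℝ) ^ (n + 1) := by
        gcongr
    _ = ((n : ℝ) + 1) ^ (n + 1) := by
        rw [div_pow, div_mul_cancel₀]
        positivity

lemma factorial_mul_exp_pow_le {n : ℕ} (hn : 1 ≤ n) :
    (n.factorial : ℝ) * exp 1 ^ n ≤ exp 1 * (n : ℝ) ^ (n + 1) := by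
  induction n, hn using Nat.le_induction with
  | base => simp
  | succ n hn ih =>
    have hn0 : (0 : ℝ) < n := by exact_mod_cast hn
    have key := exp_one_mul_pow_le hn
    have he : (0 : ℝ) < exp 1 := Real.exp_pos 1
    calc ((n + 1).factorial : ℝ) * exp 1 ^ (n + 1)
        = ((n : ℝ) + 1) * exp 1 * ((n.factorial : ℝ) * exp 1 ^ n) := by
          rw [Nat.factorial_succ]; push_cast; ring
      _ ≤ ((n : ℝ) + 1) * exp 1 * (exp 1 * (n : ℝ) ^ (n + 1)) := by gcongr
      _ = ((n : ℝ) + 1) * (exp 1 * (exp 1 * (n : ℝ) ^ (n + 1))) := by ring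
      _ ≤ ((n : ℝ) + 1) * (exp 1 * ((n : ℝ) + 1) ^ (n + 1)) := by gcongr
      _ = exp 1 * ((n : ℝ) + 1) ^ (n + 2) := by ring
      _ = exp 1 * ((n + 1 : ℕ) : ℝ) ^ (n + 1 + 1) := by push_cast; ring

lemma lambertWSeries_norm_le (n : ℕ) : ‖lambertWSeries n‖ ≤ exp 1 ^ n := by
  rcases Nat.eq_zero_or_pos n with rfl | hn
  · simp [lambertWSeries]
  · rw [norm_lambertWSeries hn.ne']
    have h1 : (n : ℝ) ^ (n - 1) ≤ (n : ℝ) ^ n :=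
      pow_le_pow_right₀ (by exact_mod_cast hn) (Nat.sub_le n 1)
    calc (n : ℝ) ^ (n - 1) / n.factorial ≤ (n : ℝ) ^ n / n.factorial := by
          gcongr
      _ ≤ exp n := Real.pow_div_factorial_le_exp (n : ℝ) (Nat.cast_nonneg n) n
      _ = exp 1 ^ n := by rw [← Real.exp_nat_mul, mul_one]

lemma le_lambertWSeries_norm {n : ℕ} (hn : 1 ≤ n) :
    exp 1 ^ (n - 1) / (n : ℝ) ^ 2 ≤ ‖lambertWSeries n‖ := by
  rw [norm_lambertWSeries (Nat.one_le_iff_ne_zero.mp hn)]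
  have hn0 : (0 : ℝ) < n := by exact_mod_cast hn
  have he : (0 : ℝ) < exp 1 := Real.exp_pos 1
  have hfac : (0 : ℝ) < n.factorial := by exact_mod_cast Nat.factorial_pos n
  rw [div_le_div_iff₀ (by positivity) hfac]
  have key := factorial_mul_exp_pow_le hn
  have hsplit : exp 1 ^ n = exp 1 ^ (n - 1) * exp 1 := by
    rw [← pow_succ, Nat.sub_add_cancel hn]
  have hsplit2 : (n : ℝ) ^ (n + 1) = (n : ℝ) ^ (n - 1) * (n : ℝ) ^ 2 := by
    rw [← pow_add]
    congr 1
    omega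
  have : (n.factorial : ℝ) * (exp 1 ^ (n - 1) * exp 1) ≤
      exp 1 * ((n : ℝ) ^ (n - 1) * (n : ℝ) ^ 2) := by
    rw [← hsplit, ← hsplit2]; exact key
  nlinarith [pow_pos he (n - 1), pow_pos hn0 (n - 1), pow_pos hn0 2]

theorem lambertWSeries_radius :
    lambertWSeries.radius = ENNReal.ofReal (Real.exp 1)⁻¹ := by
  have he : (0 : ℝ) < exp 1 := Real.exp_pos 1
  apply le_antisymm
  · -- radius ≤ 1/e
    rw [← not_lt]
    intro h
    obtain ⟨r, hr1, hr2⟩ := ENNReal.lt_iff_exists_nnreal_btwn.mp h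
    rw [← ENNReal.ofReal_coe_nnreal,
      ENNReal.ofReal_lt_ofReal_iff_of_nonneg (by positivity)] at hr1
    have hr0 : (0 : ℝ) < r := lt_trans (by positivity) hr1
    have h0 : Tendsto (fun n => ‖lambertWSeries n‖ * (r : ℝ) ^ n) atTop (𝓝 0) :=
      (isLittleO_one_iff ℝ).mp (lambertWSeries.isLittleO_one_of_lt_radius hr2)
    have hc1 : (1 : ℝ) < exp 1 * r := by
      calc (1 : ℝ) = exp 1 * (exp 1)⁻¹ := by field_simp
        _ < exp 1 * r := by gcongr
    have hrn : ‖(exp 1 * (r : ℝ))⁻¹‖ < 1 := by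
      rw [Real.norm_eq_abs, abs_inv, abs_of_pos (by positivity)]
      exact inv_lt_one_of_one_lt₀ hc1
    have hc : Tendsto (fun n : ℕ => ((n : ℝ)) ^ 2 * ((exp 1 * (r : ℝ))⁻¹) ^ n) atTop (𝓝 0) :=
      (summable_pow_mul_geometric_of_norm_lt_one 2 hrn).tendsto_atTop_zero
    have E1 := h0.eventually_lt_const one_pos
    have E2 := hc.eventually_lt_const (show (0:ℝ) < (2 * exp 1)⁻¹ by positivity)
    obtain ⟨n, ⟨hA, hB⟩, hn⟩ := ((E1.and E2).and (eventually_ge_atTop 1)).exists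
    have hn0 : (0 : ℝ) < n := by exact_mod_cast hn
    have hX : (0 : ℝ) < exp 1 ^ n * (r : ℝ) ^ n := by positivity
    have hB' : (n : ℝ) ^ 2 * (exp 1 ^ n * (r : ℝ) ^ n)⁻¹ < (2 * exp 1)⁻¹ := by
      rwa [inv_pow, mul_pow] at hB
    have hB'' : (n : ℝ) ^ 2 * (2 * exp 1) < exp 1 ^ n * (r : ℝ) ^ n := by
      have h2e : (0 : ℝ) < 2 * exp 1 := by positivity
      calc (n : ℝ) ^ 2 * (2 * exp 1)
          = ((n:ℝ)^2 * (exp 1 ^ n * (r:ℝ)^n)⁻¹) * (2 * exp 1) * (exp 1 ^ n * (r:ℝ)^n) := by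
            field_simp
        _ < (2 * exp 1)⁻¹ * (2 * exp 1) * (exp 1 ^ n * (r:ℝ)^n) := by gcongr
        _ = exp 1 ^ n * (r : ℝ) ^ n := by field_simp
    have hlow := le_lambertWSeries_norm hn
    have hlow2 : exp 1 ^ (n - 1) / (n : ℝ) ^ 2 * (r : ℝ) ^ n ≤
        ‖lambertWSeries n‖ * (r : ℝ) ^ n := by gcongr
    have hsplit : exp 1 ^ (n - 1) * exp 1 = exp 1 ^ n := by
      rw [← pow_succ, Nat.sub_add_cancel hn]
    have hkey : (2 : ℝ) < exp 1 ^ (n - 1) / (n : ℝ) ^ 2 * (r : ℝ) ^ n := by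
      rw [div_mul_eq_mul_div, lt_div_iff₀ (by positivity)]
      have hh : exp 1 ^ (n - 1) * (r : ℝ) ^ n * exp 1 = exp 1 ^ n * (r : ℝ) ^ n := by
        rw [← hsplit]; ring
      nlinarith [pow_pos hn0 2]
    linarith
  · -- 1/e ≤ radius
    have hofr : ENNReal.ofReal (exp 1)⁻¹ = ((Real.toNNReal (exp 1)⁻¹ : NNReal) : ENNReal) := rfl
    rw [hofr]
    apply lambertWSeries.le_radius_of_bound 1
    intro n
    have hcoe : ((Real.toNNReal (exp 1)⁻¹ : NNReal) : ℝ) = (exp 1)⁻¹ :=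
      Real.coe_toNNReal _ (by positivity)
    rw [hcoe]
    calc ‖lambertWSeries n‖ * ((exp 1)⁻¹) ^ n
        ≤ exp 1 ^ n * ((exp 1)⁻¹) ^ n :=
          mul_le_mul_of_nonneg_right (lambertWSeries_norm_le n) (by positivity)
      _ = 1 := by rw [← mul_pow, mul_inv_cancel₀ (ne_of_gt he), one_pow]
end

section
/- The formal power series identity ∏_{n≥1} (1 - x^n)^{-μ(n)/n} = exp(x) holds over ℚ, where μ is the Möbius function. -/
open scoped Classical

/-- Composition `f ∘ g` of formal power series over ℚ (intended for `g` with zero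
constant term). -/
noncomputable def PowerSeries.comp (f g : PowerSeries ℚ) : PowerSeries ℚ :=
  PowerSeries.mk fun n =>
    ∑ k ∈ Finset.range (n + 1), (PowerSeries.coeff k f) * PowerSeries.coeff n (g ^ k)

/-- The formal power series `log (1 - xⁿ) = -∑_{k≥1} x^{nk}/k`. -/
noncomputable def logOneSubPow (n : ℕ) : PowerSeries ℚ :=
  PowerSeries.mk fun m =>
    if m ≠ 0 ∧ n ∣ m then -(1 / ((m / n : ℕ) : ℚ)) else 0

/-- The factor `(1 - xⁿ)^{-μ(n)/n}`, interpreted as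
`exp (-(μ(n)/n) · log (1 - xⁿ))`. -/
noncomputable def moebiusFactor (n : ℕ) : PowerSeries ℚ :=
  PowerSeries.comp (PowerSeries.exp ℚ)
    ((-(ArithmeticFunction.moebius n : ℚ) / n) • logOneSubPow n)

namespace MoebiusExpAux

open PowerSeries Finset

lemma coeff_comp (f g : PowerSeries ℚ) (n : ℕ) :
    PowerSeries.coeff n (PowerSeries.comp f g) =
      ∑ k ∈ Finset.range (n + 1),
        PowerSeries.coeff k f * PowerSeries.coeff n (g ^ k) := by
  simp [PowerSeries.comp]

lemma coeff_pow_zero {F : PowerSeries ℚ} (hF : PowerSeries.constantCoeff F = 0)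
    {i k : ℕ} (h : i < k) : PowerSeries.coeff i (F ^ k) = 0 := by
  have h1 : (PowerSeries.X : PowerSeries ℚ) ^ k ∣ F ^ k :=
    pow_dvd_pow_of_dvd (PowerSeries.X_dvd_iff.mpr hF) k
  exact PowerSeries.X_pow_dvd_iff.mp h1 i h

lemma coeff_comp_exp_ext {F : PowerSeries ℚ} (hF : PowerSeries.constantCoeff F = 0)
    {i n : ℕ} (hin : i ≤ n) :
    PowerSeries.coeff i (PowerSeries.comp (PowerSeries.exp ℚ) F) =
      ∑ k ∈ Finset.range (n + 1),
        PowerSeries.coeff k (PowerSeries.exp ℚ) * PowerSeries.coeff i (F ^ k) := by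
  rw [coeff_comp]
  refine Finset.sum_subset (Finset.range_subset_range.mpr (by omega)) ?_
  intro k hk hk'
  simp only [Finset.mem_range] at hk hk'
  rw [coeff_pow_zero hF (by omega), mul_zero]

lemma exp_coeff_mul (k l : ℕ) :
    PowerSeries.coeff (k + l) (PowerSeries.exp ℚ) * ((k + l).choose k : ℚ) =
      PowerSeries.coeff k (PowerSeries.exp ℚ) * PowerSeries.coeff l (PowerSeries.exp ℚ) := by
  have h := Nat.add_choose_mul_factorial_mul_factorial k l
  have h' : (((k + l).choose l : ℚ)) * (k.factorial : ℚ) * (l.factorial : ℚ)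
      = ((k + l).factorial : ℚ) := by exact_mod_cast congrArg (Nat.cast (R := ℚ)) h
  rw [Nat.choose_symm_add]
  simp only [PowerSeries.coeff_exp, Algebra.algebraMap_self, RingHom.id_apply]
  have hk : (k.factorial : ℚ) ≠ 0 := by exact_mod_cast k.factorial_ne_zero
  have hl : (l.factorial : ℚ) ≠ 0 := by exact_mod_cast l.factorial_ne_zero
  have hkl : ((k + l).factorial : ℚ) ≠ 0 := by exact_mod_cast (k + l).factorial_ne_zero
  field_simp
  linarith [h']

lemma comp_exp_mul {F G : PowerSeries ℚ} (hF : PowerSeries.constantCoeff F = 0)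
    (hG : PowerSeries.constantCoeff G = 0) :
    PowerSeries.comp (PowerSeries.exp ℚ) F * PowerSeries.comp (PowerSeries.exp ℚ) G
      = PowerSeries.comp (PowerSeries.exp ℚ) (F + G) := by
  ext n
  rw [PowerSeries.coeff_mul, coeff_comp]
  set c : ℕ → ℚ := fun k => PowerSeries.coeff k (PowerSeries.exp ℚ) with hc
  -- rewrite RHS coefficient of (F+G)^m
  have hrhs : ∀ m : ℕ, PowerSeries.coeff n ((F + G) ^ m)
      = ∑ k ∈ Finset.range (m + 1), ∑ p ∈ Finset.HasAntidiagonal.antidiagonal n,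
          (m.choose k : ℚ) * (PowerSeries.coeff p.1 (F ^ k)
            * PowerSeries.coeff p.2 (G ^ (m - k))) := by
    intro m
    rw [add_pow, map_sum]
    refine Finset.sum_congr rfl fun k hk => ?_
    rw [mul_comm ((F ^ k) * G ^ (m - k)) _, ← nsmul_eq_mul, map_nsmul,
      PowerSeries.coeff_mul, nsmul_eq_mul, Finset.mul_sum]
  -- common form: sum over the grid
  have key : ∀ p ∈ Finset.HasAntidiagonal.antidiagonal n,
      (PowerSeries.coeff p.1 (PowerSeries.comp (PowerSeries.exp ℚ) F)) *
        (PowerSeries.coeff p.2 (PowerSeries.comp (PowerSeries.exp ℚ) G))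
      = ∑ m ∈ Finset.range (n + 1), ∑ k ∈ Finset.range (m + 1),
          c m * ((m.choose k : ℚ) * (PowerSeries.coeff p.1 (F ^ k)
            * PowerSeries.coeff p.2 (G ^ (m - k)))) := by
    intro p hp
    rw [Finset.HasAntidiagonal.mem_antidiagonal] at hp
    have hp1 : p.1 ≤ n := by omega
    have hp2 : p.2 ≤ n := by omega
    rw [coeff_comp_exp_ext hF hp1, coeff_comp_exp_ext hG hp2, Finset.sum_mul_sum]
    -- LHS is now a sum over the grid
    set T : ℕ × ℕ → ℚ := fun q =>
      c q.1 * PowerSeries.coeff p.1 (F ^ q.1) * (c q.2 * PowerSeries.coeff p.2 (G ^ q.2))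
      with hT
    have hgrid : ∑ i ∈ Finset.range (n+1), ∑ j ∈ Finset.range (n+1),
        c i * PowerSeries.coeff p.1 (F ^ i) * (c j * PowerSeries.coeff p.2 (G ^ j))
        = ∑ q ∈ Finset.range (n+1) ×ˢ Finset.range (n+1), T q := by
      rw [Finset.sum_product]
    rw [hgrid]
    -- RHS as sum over biUnion of antidiagonals
    have hstep : ∀ m ∈ Finset.range (n+1),
        ∑ k ∈ Finset.range (m + 1),
          c m * ((m.choose k : ℚ) * (PowerSeries.coeff p.1 (F ^ k)
            * PowerSeries.coeff p.2 (G ^ (m - k))))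
        = ∑ q ∈ Finset.HasAntidiagonal.antidiagonal m, T q := by
      intro m _
      rw [Finset.Nat.sum_antidiagonal_eq_sum_range_succ_mk]
      refine Finset.sum_congr rfl fun k hk => ?_
      simp only [Finset.mem_range] at hk
      have hkm : k ≤ m := by omega
      have he : k + (m - k) = m := by omega
      have := exp_coeff_mul k (m - k)
      rw [he] at this
      simp only [hT]
      calc c m * ((m.choose k : ℚ) * (PowerSeries.coeff p.1 (F ^ k)
            * PowerSeries.coeff p.2 (G ^ (m - k))))
          = (c m * (m.choose k : ℚ)) * (PowerSeries.coeff p.1 (F ^ k)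
            * PowerSeries.coeff p.2 (G ^ (m - k))) := by ring
        _ = (c k * c (m - k)) * (PowerSeries.coeff p.1 (F ^ k)
            * PowerSeries.coeff p.2 (G ^ (m - k))) := by rw [hc]; rw [this]
        _ = _ := by ring
    rw [Finset.sum_congr rfl hstep]
    rw [← Finset.sum_biUnion]
    · refine (Finset.sum_subset ?_ ?_).symm
      · intro q hq
        simp only [Finset.mem_biUnion, Finset.mem_range] at hq
        obtain ⟨m, hm, hq⟩ := hq
        rw [Finset.HasAntidiagonal.mem_antidiagonal] at hq
        simp only [Finset.mem_product, Finset.mem_range]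
        omega
      · intro q hq hq'
        simp only [Finset.mem_product, Finset.mem_range] at hq
        have hsum : n < q.1 + q.2 := by
          by_contra hle
          push_neg at hle
          exact hq' (Finset.mem_biUnion.mpr ⟨q.1 + q.2, Finset.mem_range.mpr (by omega),
            Finset.HasAntidiagonal.mem_antidiagonal.mpr rfl⟩)
        have : p.1 < q.1 ∨ p.2 < q.2 := by omega
        simp only [hT]
        rcases this with h | h
        · rw [coeff_pow_zero hF h]; ring
        · rw [coeff_pow_zero hG h]; ring
    · intro a ha b hb hab
      simp only [Finset.disjoint_left]
      intro q hqa hqb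
      have h1 := Finset.HasAntidiagonal.mem_antidiagonal.mp hqa
      have h2 := Finset.HasAntidiagonal.mem_antidiagonal.mp hqb
      exact hab (by omega)
  rw [Finset.sum_congr rfl key]
  rw [Finset.sum_comm]
  refine Finset.sum_congr rfl fun m hm => ?_
  rw [hrhs m, Finset.mul_sum]
  rw [Finset.sum_comm]
  refine Finset.sum_congr rfl fun p hp => ?_
  rw [Finset.mul_sum]

lemma comp_exp_zero : PowerSeries.comp (PowerSeries.exp ℚ) 0 = 1 := by
  ext n
  rw [coeff_comp]
  rw [Finset.sum_eq_single 0]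
  · simp [PowerSeries.coeff_exp]
  · intro k hk hk0
    rw [zero_pow hk0]
    simp
  · intro h
    simp at h

lemma prod_comp_exp (s : Finset ℕ) (S : ℕ → PowerSeries ℚ)
    (h : ∀ n ∈ s, PowerSeries.constantCoeff (S n) = 0) :
    ∏ n ∈ s, PowerSeries.comp (PowerSeries.exp ℚ) (S n)
      = PowerSeries.comp (PowerSeries.exp ℚ) (∑ n ∈ s, S n) := by
  induction s using Finset.cons_induction with
  | empty => simp [comp_exp_zero]
  | cons a s ha ih =>
    rw [Finset.prod_cons, Finset.sum_cons,
      ih (fun n hn => h n (Finset.mem_cons_of_mem hn)),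
      comp_exp_mul (h a (Finset.mem_cons_self a s))]
    rw [map_sum]
    exact Finset.sum_eq_zero fun n hn => h n (Finset.mem_cons_of_mem hn)

lemma coeff_pow_congr {S T : PowerSeries ℚ} {m : ℕ}
    (h : ∀ j ≤ m, PowerSeries.coeff j S = PowerSeries.coeff j T) (k : ℕ) :
    ∀ j ≤ m, PowerSeries.coeff j (S ^ k) = PowerSeries.coeff j (T ^ k) := by
  induction k with
  | zero => simp
  | succ k ih =>
    intro j hj
    rw [pow_succ, pow_succ, PowerSeries.coeff_mul, PowerSeries.coeff_mul]
    refine Finset.sum_congr rfl fun p hp => ?_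
    rw [Finset.HasAntidiagonal.mem_antidiagonal] at hp
    rw [ih p.1 (by omega), h p.2 (by omega)]

lemma coeff_comp_exp_congr {S T : PowerSeries ℚ} {m : ℕ}
    (h : ∀ j ≤ m, PowerSeries.coeff j S = PowerSeries.coeff j T) :
    PowerSeries.coeff m (PowerSeries.comp (PowerSeries.exp ℚ) S)
      = PowerSeries.coeff m (PowerSeries.comp (PowerSeries.exp ℚ) T) := by
  rw [coeff_comp, coeff_comp]
  exact Finset.sum_congr rfl fun k _ => by rw [coeff_pow_congr h k m le_rfl]

lemma coeff_comp_exp_X (m : ℕ) :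
    PowerSeries.coeff m (PowerSeries.comp (PowerSeries.exp ℚ) PowerSeries.X)
      = PowerSeries.coeff m (PowerSeries.exp ℚ) := by
  rw [coeff_comp]
  rw [Finset.sum_eq_single m]
  · simp [PowerSeries.coeff_X_pow]
  · intro k hk hkm
    rw [PowerSeries.coeff_X_pow]
    simp [Ne.symm hkm]
  · intro h
    simp at h

lemma sum_div_moebius {j : ℕ} (hj : j ≠ 0) :
    (∑ n ∈ j.divisors, ((ArithmeticFunction.moebius n : ℤ) : ℚ))
      = if j = 1 then 1 else 0 := by
  have h2 : ((ArithmeticFunction.moebius * ArithmeticFunction.zeta :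
      ArithmeticFunction ℤ)) j = (1 : ArithmeticFunction ℤ) j := by
    rw [ArithmeticFunction.moebius_mul_coe_zeta]
  rw [ArithmeticFunction.coe_mul_zeta_apply, ArithmeticFunction.one_apply] at h2
  have hcast : (∑ n ∈ j.divisors, ((ArithmeticFunction.moebius n : ℤ) : ℚ))
      = (((∑ n ∈ j.divisors, ArithmeticFunction.moebius n : ℤ)) : ℚ) := by push_cast; rfl
  rw [hcast, h2]
  split <;> simp

lemma coeff_sum_log (m j : ℕ) (hj : j ≤ m) :
    PowerSeries.coeff j (∑ n ∈ Finset.Icc 1 m,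
        (-(ArithmeticFunction.moebius n : ℚ) / n) • logOneSubPow n)
      = PowerSeries.coeff j (PowerSeries.X : PowerSeries ℚ) := by
  rw [map_sum]
  rcases eq_or_ne j 0 with rfl | hj0
  · simp [logOneSubPow, PowerSeries.coeff_X]
  · have hterm : ∀ n ∈ Finset.Icc 1 m,
        PowerSeries.coeff j ((-(ArithmeticFunction.moebius n : ℚ) / n) • logOneSubPow n)
          = if n ∣ j then ((ArithmeticFunction.moebius n : ℤ) : ℚ) / j else 0 := by
      intro n hn
      rw [Finset.mem_Icc] at hn
      have hn0 : (n : ℚ) ≠ 0 := by exact_mod_cast Nat.one_le_iff_ne_zero.mp hn.1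
      rw [map_smul, smul_eq_mul]
      simp only [logOneSubPow, PowerSeries.coeff_mk]
      by_cases hd : n ∣ j
      · rw [if_pos ⟨hj0, hd⟩, if_pos hd]
        have hmul : (n : ℚ) * ((j / n : ℕ) : ℚ) = (j : ℚ) := by
          exact_mod_cast congrArg (Nat.cast (R := ℚ)) (Nat.mul_div_cancel' hd)
        have hd0 : ((j / n : ℕ) : ℚ) ≠ 0 := by
          have hnne : n ≠ 0 := Nat.one_le_iff_ne_zero.mp hn.1
          have : j / n ≠ 0 := Nat.div_ne_zero_iff.mpr ⟨hnne,
            (Nat.le_of_dvd (Nat.pos_of_ne_zero hj0) hd)⟩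
          exact_mod_cast this
        have hjq : (j : ℚ) ≠ 0 := by exact_mod_cast hj0
        push_cast
        rw [← hmul]
        field_simp
      · rw [if_neg (fun hc => hd hc.2), if_neg hd, mul_zero]
    rw [Finset.sum_congr rfl hterm]
    have hsub : j.divisors ⊆ Finset.Icc 1 m := by
      intro n hn
      rw [Nat.mem_divisors] at hn
      rw [Finset.mem_Icc]
      exact ⟨Nat.one_le_iff_ne_zero.mpr (fun h => hj0 (by simpa [h] using hn.1)),
        le_trans (Nat.le_of_dvd (Nat.pos_of_ne_zero hj0) hn.1) hj⟩
    rw [← Finset.sum_subset hsub (fun n _ hn =>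
      if_neg (fun hd => hn (Nat.mem_divisors.mpr ⟨hd, hj0⟩)))]
    have : ∑ n ∈ j.divisors, (if n ∣ j then ((ArithmeticFunction.moebius n : ℤ) : ℚ) / j else 0)
        = (∑ n ∈ j.divisors, ((ArithmeticFunction.moebius n : ℤ) : ℚ)) / j := by
      rw [Finset.sum_div]
      refine Finset.sum_congr rfl fun n hn => ?_
      rw [if_pos (Nat.mem_divisors.mp hn).1]
    rw [this, sum_div_moebius hj0, PowerSeries.coeff_X]
    by_cases h1 : j = 1 <;> simp [h1]

end MoebiusExpAux

/-- `∏_{n≥1} (1 - xⁿ)^{-μ(n)/n} = exp x`, as an identity of formal power series: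
each coefficient of the (coefficientwise convergent) infinite product agrees with the
corresponding coefficient of `exp`; for the `m`-th coefficient only the factors with
`1 ≤ n ≤ m` contribute. -/
theorem moebius_product_eq_exp :
    ∀ m : ℕ, PowerSeries.coeff m (∏ n ∈ Finset.Icc 1 m, moebiusFactor n) =
      PowerSeries.coeff m (PowerSeries.exp ℚ) := by
  intro m
  have hconst : ∀ n ∈ Finset.Icc 1 m, PowerSeries.constantCoeff
      ((-(ArithmeticFunction.moebius n : ℚ) / n) • logOneSubPow n) = 0 := by
    intro n _
    rw [← PowerSeries.coeff_zero_eq_constantCoeff_apply, map_smul, smul_eq_mul]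
    simp [logOneSubPow]
  have hprod : ∏ n ∈ Finset.Icc 1 m, moebiusFactor n
      = PowerSeries.comp (PowerSeries.exp ℚ)
          (∑ n ∈ Finset.Icc 1 m, (-(ArithmeticFunction.moebius n : ℚ) / n) • logOneSubPow n) :=
    MoebiusExpAux.prod_comp_exp _ _ hconst
  rw [hprod,
    MoebiusExpAux.coeff_comp_exp_congr (fun j hj => MoebiusExpAux.coeff_sum_log m j hj),
    MoebiusExpAux.coeff_comp_exp_X]
end
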